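/- For 0 ≤ α < 1, the set {x ∈ Λ : liminf_{n→∞} (log a_n(x))/(log n) ≤ α} has Hausdorff dimension 0. -/

import Mathlib

open Filter MeasureTheory Set

/-- The Gauss map. -/
noncomputable def gaussMap (x : ℝ) : ℝ := Int.fract x⁻¹

/-- The `n`-th partial quotient (for `n ≥ 1`) of the continued fraction expansion of `x`. -/
noncomputable def cfA (n : ℕ) (x : ℝ) : ℕ := ⌊(gaussMap^[n - 1] x)⁻¹⌋₊

/-- The set `Λ` of points of `(0,1)` whose partial quotients are non-decreasing. -/
noncomputable def Lam : Set ℝ :=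
  {x | x ∈ Set.Ioo (0:ℝ) 1 ∧ ∀ n : ℕ, 1 ≤ n → cfA n x ≤ cfA (n + 1) x}


lemma cfA_one (x : ℝ) : cfA 1 x = ⌊x⁻¹⌋₊ := by simp [cfA]

lemma cfA_one_pos {x : ℝ} (hx : x ∈ Set.Ioo (0:ℝ) 1) : 1 ≤ cfA 1 x := by
  rw [cfA_one]
  exact Nat.le_floor (by rw [Nat.cast_one]; exact one_le_inv_iff₀.mpr ⟨hx.1, hx.2.le⟩)

lemma cfA_mono {x : ℝ} (hx : x ∈ Lam) {m n : ℕ} (hm : 1 ≤ m) (hmn : m ≤ n) :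
    cfA m x ≤ cfA n x := by
  induction n with
  | zero => omega
  | succ k ih =>
    rcases Nat.lt_or_ge m (k+1) with h | h
    · exact le_trans (ih (by omega)) (hx.2 k (by omega))
    · have : m = k + 1 := by omega
      simp [this]

lemma iterate_mem_Ioo {x : ℝ} (hx : x ∈ Lam) : ∀ k, gaussMap^[k] x ∈ Set.Ioo (0:ℝ) 1 := by
  intro k
  induction k with
  | zero => simpa using hx.1
  | succ k ih =>
    rw [Function.iterate_succ_apply']
    set y := gaussMap^[k] x with hy
    have h0 : (0:ℝ) ≤ gaussMap y := Int.fract_nonneg _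
    have h1 : gaussMap y < 1 := Int.fract_lt_one _
    refine ⟨lt_of_le_of_ne h0 fun h => ?_, h1⟩
    -- if gaussMap y = 0 then cfA (k+2) x = 0 < cfA 1 x, contradiction
    have hz : cfA (k+2) x = 0 := by
      have : gaussMap^[k+1] x = 0 := by rw [Function.iterate_succ_apply', ← hy, ← h]
      simp [cfA, this]
    have := cfA_mono hx (le_refl 1) (by omega : 1 ≤ k+2)
    have h1' := cfA_one_pos hx.1
    omega

lemma cfA_pos {x : ℝ} (hx : x ∈ Lam) {n : ℕ} (hn : 1 ≤ n) : 1 ≤ cfA n x := by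
  have := cfA_one_pos (iterate_mem_Ioo hx (n-1))
  rw [cfA_one] at this
  exact this

lemma cfA_shift {x : ℝ} (n : ℕ) (hn : 1 ≤ n) : cfA n (gaussMap x) = cfA (n+1) x := by
  unfold cfA
  congr 2
  rw [← Function.iterate_succ_apply]
  congr 1
  omega

lemma gaussMap_mem_Lam {x : ℝ} (hx : x ∈ Lam) : gaussMap x ∈ Lam := by
  refine ⟨by simpa using iterate_mem_Ioo hx 1, fun n hn => ?_⟩
  rw [cfA_shift n hn, cfA_shift (n+1) (by omega)]
  exact hx.2 (n+1) (by omega)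

/-- The basic identity: `y = (a₁ + G y)⁻¹`. -/
lemma cf_self_eq_inv {y : ℝ} (hy : y ∈ Set.Ioo (0:ℝ) 1) :
    y = ((cfA 1 y : ℝ) + gaussMap y)⁻¹ := by
  have hy0 : (0:ℝ) < y⁻¹ := inv_pos.2 hy.1
  have : ((cfA 1 y : ℝ)) = ((⌊y⁻¹⌋ : ℤ) : ℝ) := by
    rw [cfA_one]
    exact_mod_cast Int.natCast_floor_eq_floor hy0.le
  rw [gaussMap, Int.fract, this]
  ring_nf
  rw [inv_inv]

/-- One step of the contraction: `|x - y| = x y |Gx - Gy|` when `cfA 1 x = cfA 1 y`. -/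
lemma step_eq {x y : ℝ} (hx : x ∈ Set.Ioo (0:ℝ) 1) (hy : y ∈ Set.Ioo (0:ℝ) 1)
    (h : cfA 1 x = cfA 1 y) :
    |x - y| = x * y * |gaussMap x - gaussMap y| := by
  set a : ℝ := (cfA 1 x : ℝ) with ha
  have hxe := cf_self_eq_inv hx
  have hye := cf_self_eq_inv hy
  rw [← h] at hye
  have hax : (0:ℝ) < a + gaussMap x := by
    by_contra hc
    push_neg at hc
    rw [hxe] at hx
    simp [inv_nonpos.2 hc] at hx
    linarith [hx.1]
  have hay : (0:ℝ) < a + gaussMap y := by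
    by_contra hc
    push_neg at hc
    rw [hye] at hy
    simp [inv_nonpos.2 hc] at hy
    linarith [hy.1]
  have h1 : x * (a + gaussMap x) = 1 := by
    nth_rewrite 1 [hxe]; exact inv_mul_cancel₀ hax.ne'
  have h2 : y * (a + gaussMap y) = 1 := by
    nth_rewrite 1 [hye]; exact inv_mul_cancel₀ hay.ne'
  have key : x - y = (gaussMap y - gaussMap x) * (x * y) := by
    linear_combination y * h1 - x * h2
  rw [key, abs_mul, abs_of_pos (mul_pos hx.1 hy.1), abs_sub_comm]
  ring

/-- `x * Gx ≤ 1/2` for `x ∈ (0,1)`. -/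
lemma self_mul_gauss_le {x : ℝ} (hx : x ∈ Set.Ioo (0:ℝ) 1) (hx1 : 1 ≤ cfA 1 x) :
    x * gaussMap x ≤ 1/2 := by
  set a : ℝ := (cfA 1 x : ℝ) with ha
  have ha1 : (1:ℝ) ≤ a := by rw [ha]; exact_mod_cast hx1
  have hg0 : (0:ℝ) ≤ gaussMap x := Int.fract_nonneg _
  have hg1 : gaussMap x < 1 := Int.fract_lt_one _
  have hxe := cf_self_eq_inv hx
  have hax : (0:ℝ) < a + gaussMap x := by linarith
  have h1 : x * (a + gaussMap x) = 1 := by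
    nth_rewrite 1 [hxe]; exact inv_mul_cancel₀ hax.ne'
  nlinarith [hx.1]

lemma contract (m : ℕ) : ∀ x y : ℝ, x ∈ Lam → y ∈ Lam →
    (∀ i, 1 ≤ i → i ≤ 2*m → cfA i x = cfA i y) → |x - y| ≤ (1/2 : ℝ)^m := by
  induction m with
  | zero =>
    intro x y hx hy _
    simp only [pow_zero]
    rw [abs_sub_le_iff]
    constructor <;> nlinarith [hx.1.1, hx.1.2, hy.1.1, hy.1.2]
  | succ m ih =>
    intro x y hx hy hagree
    have hx1 := hx.1; have hy1 := hy.1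
    have hgx : gaussMap x ∈ Lam := gaussMap_mem_Lam hx
    have hgy : gaussMap y ∈ Lam := gaussMap_mem_Lam hy
    have hg2x : gaussMap^[2] x ∈ Lam := gaussMap_mem_Lam hgx
    have hg2y : gaussMap^[2] y ∈ Lam := gaussMap_mem_Lam hgy
    have e1 : cfA 1 x = cfA 1 y := hagree 1 le_rfl (by omega)
    have e2 : cfA 1 (gaussMap x) = cfA 1 (gaussMap y) := by
      rw [cfA_shift 1 le_rfl, cfA_shift 1 le_rfl]
      exact hagree 2 (by omega) (by omega)
    have hrec : |gaussMap^[2] x - gaussMap^[2] y| ≤ (1/2:ℝ)^m := by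
      apply ih _ _ hg2x hg2y
      intro i hi him
      have : gaussMap^[2] x = gaussMap (gaussMap x) := by
        simp [Function.iterate_succ_apply, Function.iterate_one]
      rw [this]
      have : gaussMap^[2] y = gaussMap (gaussMap y) := by
        simp [Function.iterate_succ_apply, Function.iterate_one]
      rw [this]
      rw [cfA_shift i hi, cfA_shift (i+1) (by omega), cfA_shift i hi, cfA_shift (i+1) (by omega)]
      exact hagree (i+2) (by omega) (by omega)
    have hq1 := step_eq hx1 hy1 e1
    have hq2 := step_eq hgx.1 hgy.1 e2
    have hG2 : gaussMap (gaussMap x) = gaussMap^[2] x := by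
      simp [Function.iterate_succ_apply, Function.iterate_one]
    have hG2y : gaussMap (gaussMap y) = gaussMap^[2] y := by
      simp [Function.iterate_succ_apply, Function.iterate_one]
    rw [hG2, hG2y] at hq2
    have hc1 : x * gaussMap x ≤ 1/2 := self_mul_gauss_le hx1 (cfA_pos hx le_rfl)
    have hc2 : y * gaussMap y ≤ 1/2 := self_mul_gauss_le hy1 (cfA_pos hy le_rfl)
    have hxg0 : (0:ℝ) < gaussMap x := hgx.1.1
    have hyg0 : (0:ℝ) < gaussMap y := hgy.1.1
    rw [hq1, hq2]
    have habs : (0:ℝ) ≤ |gaussMap^[2] x - gaussMap^[2] y| := abs_nonneg _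
    calc x * y * (gaussMap x * gaussMap y * |gaussMap^[2] x - gaussMap^[2] y|)
        = (x * gaussMap x) * (y * gaussMap y) * |gaussMap^[2] x - gaussMap^[2] y| := by ring
      _ ≤ (1/2) * (1/2) * (1/2:ℝ)^m := by
          apply mul_le_mul _ hrec habs (by norm_num)
          exact mul_le_mul hc1 hc2 (mul_pos hy1.1 hyg0).le (by norm_num)
      _ ≤ (1/2:ℝ)^(m+1) := by rw [pow_succ]; nlinarith [pow_pos (by norm_num : (0:ℝ) < 1/2) m]

open Classical in
/-- Monotone patterns of length `n` with values in `[1, M]`. -/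
noncomputable def patt (n M : ℕ) : Finset (Fin n → ℕ) :=
  (Fintype.piFinset fun _ => Finset.Icc 1 M).filter Monotone

open Classical in
noncomputable def cnt {n : ℕ} (b : Fin n → ℕ) (v : ℕ) : ℕ :=
  (Finset.univ.filter (fun j : Fin n => b j ≤ v)).card

lemma cnt_le {n : ℕ} (b : Fin n → ℕ) (v : ℕ) : cnt b v ≤ n := by
  classical
  refine le_trans (Finset.card_filter_le _ _) ?_
  simp

lemma mem_patt_iff {n M : ℕ} {b : Fin n → ℕ} :
    b ∈ patt n M ↔ (∀ j, 1 ≤ b j ∧ b j ≤ M) ∧ Monotone b := by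
  classical
  simp [patt, Fintype.mem_piFinset, Finset.mem_Icc]

lemma patt_card (n M : ℕ) : (patt n M).card ≤ (n+1)^M := by
  classical
  have key : ∀ b ∈ patt n M, ∀ (i : Fin n) (v : ℕ),
      (b i ≤ v ↔ i.1 < cnt b v) := by
    intro b hb i v
    obtain ⟨_, hmono⟩ := mem_patt_iff.mp hb
    constructor
    · intro hle
      have hsub : Finset.Iic i ⊆ Finset.univ.filter (fun j : Fin n => b j ≤ v) := by
        intro j hj
        simp only [Finset.mem_Iic] at hj
        simp only [Finset.mem_filter, Finset.mem_univ, true_and]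
        exact le_trans (hmono hj) hle
      have := Finset.card_le_card hsub
      rw [Fin.card_Iic] at this
      unfold cnt
      omega
    · intro hlt
      by_contra hc
      push_neg at hc
      have hsub : Finset.univ.filter (fun j : Fin n => b j ≤ v) ⊆ Finset.Iio i := by
        intro j hj
        simp only [Finset.mem_filter, Finset.mem_univ, true_and] at hj
        simp only [Finset.mem_Iio]
        by_contra hji
        push_neg at hji
        exact absurd (le_trans (hmono hji) hj) (by omega)
      have := Finset.card_le_card hsub
      rw [Fin.card_Iio] at this
      unfold cnt at hlt
      omega
  have hinj : Set.InjOn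
      (fun b : Fin n → ℕ => fun v : Fin M =>
        (⟨cnt b (v.1 + 1), by have := cnt_le b (v.1+1); omega⟩ : Fin (n+1)))
      (patt n M) := by
    intro b hb b' hb' heq
    funext i
    have hbr := (mem_patt_iff.mp hb).1 i
    have hbr' := (mem_patt_iff.mp hb').1 i
    have hcount : ∀ v : ℕ, 1 ≤ v → v ≤ M → cnt b v = cnt b' v := by
      intro v hv1 hvM
      have h3 : cnt b (v - 1 + 1) = cnt b' (v - 1 + 1) :=
        congrArg Fin.val (congrFun heq (⟨v-1, by omega⟩ : Fin M))
      have h2 : v - 1 + 1 = v := by omega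
      rwa [h2] at h3
    have hle1 : b i ≤ b' i := by
      rw [key b hb i (b' i), hcount (b' i) hbr'.1 hbr'.2, ← key b' hb' i (b' i)]
    have hle2 : b' i ≤ b i := by
      rw [key b' hb' i (b i), ← hcount (b i) hbr.1 hbr.2, ← key b hb i (b i)]
    omega
  calc (patt n M).card ≤ (Finset.univ : Finset (Fin M → Fin (n+1))).card :=
        Finset.card_le_card_of_injOn _ (fun _ _ => Finset.mem_univ _) hinj
    _ = (n+1)^M := by
        rw [Finset.card_univ, Fintype.card_fun]
        simp

noncomputable def cyl (n : ℕ) (b : Fin n → ℕ) : Set ℝ :=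
  {x | x ∈ Lam ∧ ∀ i : Fin n, cfA (i.1 + 1) x = b i}

lemma cyl_diam (n : ℕ) (b : Fin n → ℕ) :
    EMetric.diam (cyl n b) ≤ ENNReal.ofReal ((1/2:ℝ)^(n/2)) := by
  apply EMetric.diam_le
  intro x hx y hy
  rw [edist_dist, Real.dist_eq]
  apply ENNReal.ofReal_le_ofReal
  apply contract (n/2) x y hx.1 hy.1
  intro i hi h2i
  have hi' : i - 1 < n := by omega
  have h1 : cfA (i - 1 + 1) x = b ⟨i-1, hi'⟩ := hx.2 ⟨i-1, hi'⟩
  have h2 : cfA (i - 1 + 1) y = b ⟨i-1, hi'⟩ := hy.2 ⟨i-1, hi'⟩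
  have he : i - 1 + 1 = i := by omega
  rw [he] at h1 h2
  rw [h1, h2]

noncomputable def Mq (a' : ℝ) (k : ℕ) : ℕ := ⌊(k:ℝ)^a'⌋₊

lemma event_ineq (d : ℝ) (hd : 0 < d) (a' : ℝ) (ha0 : 0 < a') (ha1 : a' < 1) :
    ∀ᶠ n : ℕ in atTop,
      ((n:ℝ)+1)^(Mq a' n) * ((1/2:ℝ)^(n/2))^d ≤ ((2:ℝ)^(-(d/4)))^n := by
  have hlog2 : (0:ℝ) < Real.log 2 := Real.log_pos one_lt_two
  set ε : ℝ := d * Real.log 2 / 32 with hε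
  have hεpos : 0 < ε := by positivity
  have hlo := (isLittleO_log_rpow_atTop (by linarith : (0:ℝ) < 1 - a')).def hεpos
  have htend : Tendsto (fun n : ℕ => (n:ℝ) + 1) atTop atTop :=
    tendsto_atTop_add_const_right _ 1 tendsto_natCast_atTop_atTop
  filter_upwards [htend.eventually hlo, eventually_ge_atTop 4] with n hlow hn4
  set N : ℝ := (n:ℝ) with hN
  have hN4 : (4:ℝ) ≤ N := by rw [hN]; exact_mod_cast hn4
  have hN1pos : (0:ℝ) < N + 1 := by linarith
  have hm : ((Mq a' n : ℕ) : ℝ) ≤ N ^ a' := Nat.floor_le (Real.rpow_nonneg (by linarith) _)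
  -- bound on the log of the first factor
  have hlog1 : ((Mq a' n : ℕ) : ℝ) * Real.log (N + 1) ≤ ε * (N + 1) := by
    have h1 : |Real.log (N+1)| ≤ ε * |(N+1) ^ (1 - a')| := by
      simpa [Real.norm_eq_abs] using hlow
    have h2 : Real.log (N+1) ≤ ε * (N+1) ^ (1 - a') := by
      calc Real.log (N+1) ≤ |Real.log (N+1)| := le_abs_self _
        _ ≤ ε * |(N+1) ^ (1 - a')| := h1
        _ = ε * (N+1) ^ (1 - a') := by
            rw [abs_of_nonneg (Real.rpow_nonneg hN1pos.le _)]
      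
    have h3 : ((Mq a' n : ℕ) : ℝ) ≤ (N+1) ^ a' :=
      le_trans hm (Real.rpow_le_rpow (by linarith) (by linarith) ha0.le)
    have hlogpos : 0 ≤ Real.log (N+1) := Real.log_nonneg (by linarith)
    calc ((Mq a' n : ℕ) : ℝ) * Real.log (N + 1) ≤ (N+1)^a' * (ε * (N+1)^(1-a')) := by
          apply mul_le_mul h3 h2 hlogpos (Real.rpow_nonneg hN1pos.le _)
      _ = ε * ((N+1)^a' * (N+1)^(1-a')) := by ring
      _ = ε * (N+1) := by
          rw [← Real.rpow_add hN1pos]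
          norm_num
  have hcast : N ≤ 2 * ((n/2 : ℕ) : ℝ) + 1 := by
    have h : n ≤ 2 * (n/2) + 1 := by omega
    rw [hN]
    exact_mod_cast h
  -- pass to logarithms
  have hLpos : (0:ℝ) < ((N+1))^(Mq a' n) * ((1/2:ℝ)^(n/2))^d := by positivity
  have hRpos : (0:ℝ) < ((2:ℝ)^(-(d/4)))^n := by positivity
  rw [← Real.exp_log hLpos, ← Real.exp_log hRpos]
  apply Real.exp_le_exp.mpr
  rw [Real.log_mul (by positivity) (by positivity), Real.log_pow, Real.log_pow,
    Real.log_rpow (by positivity), Real.log_rpow (by norm_num)]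
  have hhalf : Real.log (1/2 : ℝ) = -Real.log 2 := by
    rw [one_div, Real.log_inv]
  rw [Real.log_pow, hhalf]
  have expand : ε = d * Real.log 2 / 32 := hε
  nlinarith [mul_le_mul_of_nonneg_left hcast (by positivity : (0:ℝ) ≤ d * Real.log 2),
    hlog1, mul_pos hd hlog2, hN4]

open scoped NNReal ENNReal
open Topology
noncomputable def covSet (a' : ℝ) (N : ℕ) (p : (n : ℕ) × (Fin (N + n) → ℕ)) : Set ℝ :=
  if p.2 ∈ patt (N + p.1) (Mq a' (N + p.1)) then cyl (N + p.1) p.2 else ∅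

noncomputable def cseq (a' : ℝ) (d : ℝ≥0) (k : ℕ) : ℝ≥0∞ :=
  ((k+1 : ℕ) : ℝ≥0∞)^(Mq a' k) * (ENNReal.ofReal ((1/2:ℝ)^(k/2)))^(d:ℝ)


set_option maxHeartbeats 1000000 in
/-- For `0 ≤ α < 1`, the set of `x ∈ Λ` with `liminf (log aₙ(x))/(log n) ≤ α`
has Hausdorff dimension `0`. -/
theorem dimH_liminf_le_alpha_lt_one (α : ℝ) (h0 : 0 ≤ α) (h1 : α < 1) :
    dimH {x | x ∈ Lam ∧
        Filter.liminf (fun n : ℕ => ((Real.log (cfA n x) / Real.log n : ℝ) : EReal)) atTop ≤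
          (α : EReal)} = 0 := by
  set α' : ℝ := (α + 1) / 2 with hα'
  have hα'0 : 0 < α' := by rw [hα']; linarith
  have hα'1 : α' < 1 := by rw [hα']; linarith
  have hαα' : α < α' := by rw [hα']; linarith
  set S := {x : ℝ | x ∈ Lam ∧
      Filter.liminf (fun n : ℕ => ((Real.log (cfA n x) / Real.log n : ℝ) : EReal)) atTop ≤
        (α : EReal)} with hS
  have main : ∀ d : ℝ≥0, 0 < d → dimH S ≤ (d : ℝ≥0∞) := by
    intro d hd
    have hdpos : (0:ℝ) < (d:ℝ) := by exact_mod_cast hd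
    apply dimH_le_of_hausdorffMeasure_ne_top (d := d)
    -- the covering sets and their diameters
    have hdiam : ∀ (N : ℕ) (p : (n : ℕ) × (Fin (N + n) → ℕ)),
        EMetric.diam (covSet α' N p) ≤ ENNReal.ofReal ((1/2:ℝ)^(N/2)) := by
      intro N p
      by_cases h : p.2 ∈ patt (N + p.1) (Mq α' (N + p.1))
      · rw [covSet, if_pos h]
        refine le_trans (cyl_diam _ _) (ENNReal.ofReal_le_ofReal ?_)
        exact pow_le_pow_of_le_one (by norm_num) (by norm_num)
          (Nat.div_le_div_right (Nat.le_add_right N p.1))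
      · rw [covSet, if_neg h]; simp [show EMetric.diam (∅ : Set ℝ) = 0 from Metric.ediam_empty]
    have hr0 : Tendsto (fun N : ℕ => ENNReal.ofReal ((1/2:ℝ)^(N/2))) atTop (𝓝 0) := by
      have hdiv : Tendsto (fun N : ℕ => N / 2) atTop atTop :=
        tendsto_atTop_atTop.mpr (fun b => ⟨2*b, fun n hn => by omega⟩)
      have h2 : Tendsto (fun N : ℕ => (1/2:ℝ)^(N/2)) atTop (𝓝 0) :=
        (tendsto_pow_atTop_nhds_zero_of_lt_one (by norm_num) (by norm_num)).comp hdiv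
      simpa using ENNReal.tendsto_ofReal h2
    have hcover : ∀ N : ℕ, S ⊆ ⋃ p, covSet α' N p := by
      intro N x hx
      rw [hS, Set.mem_setOf_eq] at hx
      obtain ⟨hxL, hxlim⟩ := hx
      have hlt : Filter.liminf
          (fun n : ℕ => ((Real.log (cfA n x) / Real.log n : ℝ) : EReal)) atTop
            < ((α' : ℝ) : EReal) :=
        lt_of_le_of_lt hxlim (by exact_mod_cast hαα')
      have hfreq := Filter.frequently_lt_of_liminf_lt (h := hlt)
      obtain ⟨n, hlt', hge⟩ := (hfreq.and_eventually (eventually_ge_atTop (max N 2))).exists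
      have hnN : N ≤ n := le_trans (le_max_left _ _) hge
      have hn2 : 2 ≤ n := le_trans (le_max_right _ _) hge
      have hreal : Real.log (cfA n x) / Real.log n < α' := by exact_mod_cast hlt'
      have hn1 : (1:ℝ) < (n:ℝ) := by exact_mod_cast (by omega : (1:ℕ) < n)
      have hlogn : 0 < Real.log n := Real.log_pos hn1
      have hnpos : (0:ℝ) < (n:ℝ) := by linarith
      have ha1 : 1 ≤ cfA n x := cfA_pos hxL (by omega)
      have hapos : (0:ℝ) < (cfA n x : ℝ) := by exact_mod_cast (by omega : 0 < cfA n x)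
      have hlt2 : Real.log (cfA n x) < α' * Real.log n := (div_lt_iff₀ hlogn).mp hreal
      have hub : ((cfA n x : ℕ) : ℝ) < (n:ℝ)^α' := by
        rw [← Real.exp_log hapos, ← Real.exp_log (Real.rpow_pos_of_pos hnpos α')]
        exact Real.exp_lt_exp.mpr (by rwa [Real.log_rpow hnpos])
      have hMle : cfA n x ≤ Mq α' n := Nat.le_floor hub.le
      refine Set.mem_iUnion.mpr ⟨⟨n - N, fun j => cfA (j.1 + 1) x⟩, ?_⟩
      have hkn : N + (n - N) = n := by omega
      have hp : (fun j : Fin (N + (n - N)) => cfA (j.1 + 1) x)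
          ∈ patt (N + (n - N)) (Mq α' (N + (n - N))) := by
        rw [mem_patt_iff]
        constructor
        · intro j
          have hj : j.1 + 1 ≤ n := by have := j.2; omega
          refine ⟨cfA_pos hxL (by omega), ?_⟩
          refine le_trans (cfA_mono hxL (by omega) hj) ?_
          rw [hkn]; exact hMle
        · intro i j hij
          have hij' : i.1 ≤ j.1 := hij
          exact cfA_mono hxL (by omega) (by omega)
      simp only [covSet, hp, if_true]
      exact ⟨hxL, fun i => rfl⟩
    have hmeas := Measure.hausdorffMeasure_le_liminf_tsum (d:ℝ) S
      (fun N => ENNReal.ofReal ((1/2:ℝ)^(N/2))) hr0 (covSet α')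
      (Eventually.of_forall hdiam) (Eventually.of_forall hcover)
    have hc : ∀ k, cseq α' d k
        = ((k+1 : ℕ) : ℝ≥0∞)^(Mq α' k) * (ENNReal.ofReal ((1/2:ℝ)^(k/2)))^(d:ℝ) :=
      fun k => rfl
    have hsumle : ∀ N : ℕ,
        (∑' p : (n : ℕ) × (Fin (N + n) → ℕ), EMetric.diam (covSet α' N p) ^ (d:ℝ))
          ≤ ∑' n : ℕ, cseq α' d (N + n) := by
      intro N
      rw [ENNReal.tsum_sigma']
      apply ENNReal.tsum_le_tsum
      intro n
      classical
      have hzero : ∀ b : Fin (N+n) → ℕ, b ∉ patt (N+n) (Mq α' (N+n)) →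
          EMetric.diam (covSet α' N ⟨n, b⟩) ^ (d:ℝ) = 0 := by
        intro b hb
        simp only [covSet, hb, if_false]
        rw [show EMetric.diam (∅ : Set ℝ) = 0 from Metric.ediam_empty, ENNReal.zero_rpow_of_pos hdpos]
      rw [tsum_eq_sum (fun b hb => hzero b hb)]
      have hterm : ∀ b ∈ patt (N+n) (Mq α' (N+n)),
          EMetric.diam (covSet α' N ⟨n, b⟩) ^ (d:ℝ)
            ≤ (ENNReal.ofReal ((1/2:ℝ)^((N+n)/2)))^(d:ℝ) := by
        intro b hb
        refine ENNReal.rpow_le_rpow ?_ hdpos.le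
        simp only [covSet, hb, if_true]
        exact cyl_diam _ _
      calc ∑ b ∈ patt (N+n) (Mq α' (N+n)), EMetric.diam (covSet α' N ⟨n, b⟩) ^ (d:ℝ)
          ≤ ∑ _b ∈ patt (N+n) (Mq α' (N+n)), (ENNReal.ofReal ((1/2:ℝ)^((N+n)/2)))^(d:ℝ) :=
            Finset.sum_le_sum hterm
        _ = (patt (N+n) (Mq α' (N+n))).card
              • ((ENNReal.ofReal ((1/2:ℝ)^((N+n)/2)))^(d:ℝ)) := Finset.sum_const _
        _ ≤ cseq α' d (N+n) := by
            rw [hc (N+n), nsmul_eq_mul]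
            refine mul_le_mul_left ?_ _
            have h := patt_card (N+n) (Mq α' (N+n))
            exact_mod_cast h
    set ρ : ℝ≥0∞ := ENNReal.ofReal ((2:ℝ)^(-((d:ℝ)/4))) with hρdef
    have hρlt1 : ρ < 1 := by
      rw [hρdef]
      exact ENNReal.ofReal_lt_one.mpr
        (Real.rpow_lt_one_of_one_lt_of_neg one_lt_two (by linarith))
    obtain ⟨N0, hN0⟩ := eventually_atTop.mp (event_ineq (d:ℝ) hdpos α' hα'0 hα'1)
    have hcle : ∀ k, N0 ≤ k → cseq α' d k ≤ ρ^k := by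
      intro k hk
      have hRk := hN0 k hk
      have eA : ((k+1:ℕ) : ℝ≥0∞) = ENNReal.ofReal ((k:ℝ)+1) := by
        rw [← ENNReal.ofReal_natCast (k+1)]
        norm_num
      have eB : (ENNReal.ofReal ((1/2:ℝ)^(k/2)))^(d:ℝ)
          = ENNReal.ofReal (((1/2:ℝ)^(k/2))^(d:ℝ)) :=
        ENNReal.ofReal_rpow_of_pos (by positivity)
      have e1 : cseq α' d k = ENNReal.ofReal (((k:ℝ)+1)^(Mq α' k) * ((1/2:ℝ)^(k/2))^(d:ℝ)) := by
        rw [hc k, eA, eB, ← ENNReal.ofReal_pow (by positivity), ← ENNReal.ofReal_mul (by positivity)]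
      rw [e1, hρdef]
      calc ENNReal.ofReal (((k:ℝ)+1)^(Mq α' k) * ((1/2:ℝ)^(k/2))^(d:ℝ))
          ≤ ENNReal.ofReal (((2:ℝ)^(-((d:ℝ)/4)))^k) := ENNReal.ofReal_le_ofReal hRk
        _ = (ENNReal.ofReal ((2:ℝ)^(-((d:ℝ)/4))))^k := ENNReal.ofReal_pow (by positivity) k
    have hgeo : (∑' k : ℕ, ρ^k) ≠ ⊤ := by
      rw [ENNReal.tsum_geometric]
      exact ENNReal.inv_ne_top.mpr (by simpa [pos_iff_ne_zero] using tsub_pos_iff_lt.mpr hρlt1)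
    have hρne : ρ ≠ ⊤ := ENNReal.ofReal_ne_top
    have hfin : (∑' k : ℕ, cseq α' d k) ≠ ⊤ := by
      classical
      have hsplit : ∀ k, cseq α' d k ≤ (if k < N0 then cseq α' d k else 0) + ρ^k := by
        intro k
        by_cases h : k < N0
        · simp only [h, if_true]; exact le_self_add
        · simp only [h, if_false, zero_add]; exact hcle k (by omega)
      have h1 : (∑' k : ℕ, cseq α' d k)
          ≤ (∑' k : ℕ, (if k < N0 then cseq α' d k else 0)) + ∑' k : ℕ, ρ^k := by
        refine le_trans (ENNReal.tsum_le_tsum hsplit) ?_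
        rw [ENNReal.tsum_add]
      have h2 : (∑' k : ℕ, (if k < N0 then cseq α' d k else 0))
          = ∑ k ∈ Finset.range N0, (if k < N0 then cseq α' d k else 0) := by
        apply tsum_eq_sum
        intro b hb
        rw [Finset.mem_range] at hb
        simp [hb]
      refine ne_top_of_le_ne_top (ENNReal.add_ne_top.mpr ⟨?_, hgeo⟩) h1
      rw [h2]
      refine ne_of_lt (ENNReal.sum_lt_top.mpr ?_)
      intro i _
      split
      · rw [hc i]
        exact ENNReal.mul_lt_top
          (ENNReal.pow_lt_top (ENNReal.natCast_lt_top _))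
          (ENNReal.rpow_lt_top_of_nonneg hdpos.le ENNReal.ofReal_ne_top)
      · exact lt_of_le_of_lt (le_refl 0) ENNReal.zero_lt_top
    have htail : Tendsto (fun N => ∑' n : ℕ, cseq α' d (N + n)) atTop (𝓝 0) := by
      have h := ENNReal.tendsto_sum_nat_add (cseq α' d) hfin
      simpa [add_comm] using h
    have hmzero : μH[(d:ℝ)] S = 0 := by
      refine le_antisymm (le_trans hmeas ?_) zero_le
      calc liminf (fun N => ∑' p : (n : ℕ) × (Fin (N + n) → ℕ),
              EMetric.diam (covSet α' N p) ^ (d:ℝ)) atTop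
          ≤ liminf (fun N => ∑' n : ℕ, cseq α' d (N + n)) atTop :=
            liminf_le_liminf (Eventually.of_forall hsumle)
        _ = 0 := htail.liminf_eq
    simp [hmzero]
  refine le_antisymm ?_ zero_le
  refine ENNReal.le_of_forall_pos_le_add fun ε hε _ => ?_
  simpa using main ε hε
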